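/- With Ĩ the set of simple roots orthogonal to the highest root α̃, let w₀ be the longest element of W and w_Ĩ the longest element of W_Ĩ. Then w₀ w_Ĩ = w_Ĩ w₀ = s_α̃, the reflection in the highest root. -/

import Mathlib

open scoped RealInnerProductSpace

variable {V : Type*} [NormedAddCommGroup V] [InnerProductSpace ℝ V]

/-- An irreducible reduced (crystallographic) root system in a real inner product space. -/
structure IsIrredRootSystem (Φ : Set V) : Prop where
  finite : Φ.Finite
  nonempty : Φ.Nonempty
  nonzero : (0 : V) ∉ Φ
  spanning : Submodule.span ℝ Φ = ⊤
  reflect_mem : ∀ α ∈ Φ, ∀ β ∈ Φ, β - (2 * ⟪α, β⟫ / ⟪α, α⟫) • α ∈ Φ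
  crystallographic : ∀ α ∈ Φ, ∀ β ∈ Φ, ∃ n : ℤ, 2 * ⟪α, β⟫ / ⟪α, α⟫ = (n : ℝ)
  reduced : ∀ α ∈ Φ, ∀ t : ℝ, t • α ∈ Φ → t = 1 ∨ t = -1
  irreducible : ∀ Φ₁ Φ₂ : Set V, Φ₁ ∪ Φ₂ = Φ →
    (∀ α ∈ Φ₁, ∀ β ∈ Φ₂, ⟪α, β⟫ = 0) → Φ₁ = ∅ ∨ Φ₂ = ∅

/-- `Δ` is a base (system of simple roots) for `Φ`: it is contained in `Φ`, linearly
independent, and every root is an integral combination of `Δ` with coefficients all of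
the same sign. -/
def IsBase (Φ : Set V) (Δ : Finset V) : Prop :=
  (Δ : Set V) ⊆ Φ ∧ LinearIndependent ℝ (fun a : Δ => (a : V)) ∧
    ∀ γ ∈ Φ, ∃ c : V → ℤ, γ = ∑ α ∈ Δ, (c α : ℝ) • α ∧
      ((∀ α ∈ Δ, 0 ≤ c α) ∨ (∀ α ∈ Δ, c α ≤ 0))

/-- The positive roots with respect to the base `Δ`. -/
def posRoots (Φ : Set V) (Δ : Finset V) : Set V :=
  {γ ∈ Φ | ∃ c : V → ℕ, γ = ∑ α ∈ Δ, (c α : ℝ) • α}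

/-- The coroot `γ^∨ = 2γ/(γ|γ)` of a root `γ`. -/
noncomputable def coroot (γ : V) : V := (2 / ⟪γ, γ⟫) • γ

/-- The set of reflections in the roots of `Φ`, as linear automorphisms of `V`. -/
def reflections (Φ : Set V) : Set (V ≃ₗ[ℝ] V) :=
  {w | ∃ α ∈ Φ, ∀ v, w v = v - (2 * ⟪α, v⟫ / ⟪α, α⟫) • α}

/-- The Weyl group of `Φ`: the group generated by the reflections in the roots. -/
def weylGroup (Φ : Set V) : Subgroup (V ≃ₗ[ℝ] V) := Subgroup.closure (reflections Φ)

/-- The simple reflections with respect to the base `Δ`. -/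
def simpleReflections (Δ : Finset V) : Set (V ≃ₗ[ℝ] V) :=
  {w | ∃ α ∈ Δ, ∀ v, w v = v - (2 * ⟪α, v⟫ / ⟪α, α⟫) • α}

/-- The length of `w` with respect to the simple reflections determined by `Δ`. -/
noncomputable def len (Δ : Finset V) (w : V ≃ₗ[ℝ] V) : ℕ :=
  sInf {n | ∃ L : List (V ≃ₗ[ℝ] V),
    (∀ s ∈ L, s ∈ simpleReflections Δ) ∧ L.length = n ∧ L.prod = w}

/-- `t` is the highest root of `Φ` with respect to the base `Δ`. -/
def IsHighestRoot (Φ : Set V) (Δ : Finset V) (t : V) : Prop :=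
  t ∈ Φ ∧ ∀ α ∈ Φ, ∃ c : V → ℕ, t - α = ∑ a ∈ Δ, (c a : ℝ) • a

/-- The standard parabolic subgroup `W_I` generated by the reflections in the roots of
`I`. -/
def parabolic (I : Set V) : Subgroup (V ≃ₗ[ℝ] V) :=
  Subgroup.closure {w | ∃ α ∈ I, ∀ v, w v = v - (2 * ⟪α, v⟫ / ⟪α, α⟫) • α}

namespace LMLP
variable {V : Type*} [NormedAddCommGroup V] [InnerProductSpace ℝ V]

/-- The reflection in the vector `α`, as a linear map. -/
noncomputable def rlin (α : V) : V →ₗ[ℝ] V where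
  toFun v := v - (2 * ⟪α, v⟫ / ⟪α, α⟫) • α
  map_add' u v := by
    simp only [inner_add_right]
    rw [show 2 * (⟪α,u⟫ + ⟪α,v⟫) / ⟪α,α⟫ = 2*⟪α,u⟫/⟪α,α⟫ + 2*⟪α,v⟫/⟪α,α⟫ by ring,
      add_smul]
    abel
  map_smul' c v := by
    simp only [real_inner_smul_right, RingHom.id_apply, smul_sub, smul_smul]
    congr 2
    ring

lemma rlin_apply (α v : V) : rlin α v = v - (2 * ⟪α, v⟫ / ⟪α, α⟫) • α := rfl

lemma rlin_invol (α : V) : Function.Involutive (rlin α) := by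
  intro v
  by_cases h : ⟪α, α⟫ = 0
  · simp [rlin_apply, inner_self_eq_zero.mp h]
  · simp only [rlin_apply, inner_sub_right, real_inner_smul_right, smul_smul]
    rw [show 2 * (⟪α,v⟫ - 2*⟪α,v⟫/⟪α,α⟫*⟪α,α⟫) / ⟪α,α⟫ = - (2*⟪α,v⟫/⟪α,α⟫) by
      field_simp; ring]
    rw [neg_smul, sub_neg_eq_add, sub_add_cancel]

/-- The reflection in the vector `α`, as a linear equivalence. -/
noncomputable def refl (α : V) : V ≃ₗ[ℝ] V := LinearEquiv.ofInvolutive (rlin α) (rlin_invol α)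

lemma refl_apply (α v : V) : refl α v = v - (2 * ⟪α, v⟫ / ⟪α, α⟫) • α := rfl

lemma refl_mul_self (α : V) : refl α * refl α = 1 := by
  apply LinearEquiv.toLinearMap_injective
  apply LinearMap.ext
  intro v
  exact rlin_invol α v

lemma refl_inv (α : V) : (refl α)⁻¹ = refl α := by
  rw [eq_comm, eq_inv_iff_mul_eq_one, refl_mul_self]

lemma refl_apply_self (α : V) (h : ⟪α, α⟫ ≠ 0) : refl α α = -α := by
  rw [refl_apply, mul_div_assoc, div_self h]
  module

lemma refl_apply_orth (α v : V) (h : ⟪α, v⟫ = 0) : refl α v = v := by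
  simp [refl_apply, h]

lemma refl_orth (α : V) (u v : V) : ⟪refl α u, refl α v⟫ = ⟪u, v⟫ := by
  by_cases h : ⟪α, α⟫ = 0
  · have h0 : α = 0 := by
      by_contra hne; exact hne (inner_self_eq_zero.mp h)
    simp [refl_apply, h0]
  · simp only [refl_apply, inner_sub_left, inner_sub_right, real_inner_smul_left,
      real_inner_smul_right]
    rw [real_inner_comm α u]
    field_simp
    ring

end LMLP
section Ctx
open Submodule in
lemma LMLP.base_span {Φ : Set V} {Δ : Finset V} (hΦ : IsIrredRootSystem Φ) (hΔ : IsBase Φ Δ) :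
    ⊤ ≤ Submodule.span ℝ (Set.range (fun a : {x // x ∈ Δ} => (a : V))) := by
  have h1 : Set.range (fun a : {x // x ∈ Δ} => (a : V)) = (Δ : Set V) := Subtype.range_coe
  rw [h1, ← hΦ.spanning]
  refine Submodule.span_le.mpr (fun γ hγ => ?_)
  obtain ⟨c, hc, -⟩ := hΔ.2.2 γ hγ
  rw [hc]
  exact Submodule.sum_mem _ (fun α hα => Submodule.smul_mem _ _ (Submodule.subset_span hα))

namespace LMLP

variable {Φ : Set V} {Δ : Finset V}

/-- positivity of a root w.r.t. the basis coming from `Δ`. -/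
def IsPos (Φ : Set V) (b : Module.Basis {x // x ∈ Δ} ℝ V) (γ : V) : Prop :=
  γ ∈ Φ ∧ ∀ a : {x // x ∈ Δ}, 0 ≤ b.repr γ a

variable {b : Module.Basis {x // x ∈ Δ} ℝ V}

lemma repr_eq (hb : ∀ a : {x // x ∈ Δ}, b a = (a : V)) {γ : V} (c : V → ℝ)
    (hγ : γ = ∑ α ∈ Δ, c α • α) (a : {x // x ∈ Δ}) : b.repr γ a = c a := by
  have h2 : γ = ∑ i : {x // x ∈ Δ}, (fun i : {x // x ∈ Δ} => c i.1) i • b i := by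
    rw [hγ, ← Finset.sum_coe_sort Δ (fun α => c α • α)]
    exact Finset.sum_congr rfl (fun a _ => by rw [hb a])
  rw [h2, b.repr_sum_self]

lemma sum_repr (hb : ∀ a : {x // x ∈ Δ}, b a = (a : V)) (γ : V) :
    γ = ∑ a : {x // x ∈ Δ}, b.repr γ a • (a : V) := by
  conv_lhs => rw [← b.sum_repr γ]
  exact Finset.sum_congr rfl (fun a _ => by rw [hb a])

lemma eq_zero_of_repr_zero (hb : ∀ a : {x // x ∈ Δ}, b a = (a : V)) {γ : V}
    (h : ∀ a : {x // x ∈ Δ}, b.repr γ a = 0) : γ = 0 := by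
  rw [sum_repr hb γ]
  exact Finset.sum_eq_zero (fun a _ => by rw [h a, zero_smul])

lemma root_ne_zero (hΦ : IsIrredRootSystem Φ) {γ : V} (hγ : γ ∈ Φ) : γ ≠ 0 :=
  fun h => hΦ.nonzero (h ▸ hγ)

lemma inner_self_pos' (hΦ : IsIrredRootSystem Φ) {γ : V} (hγ : γ ∈ Φ) : 0 < ⟪γ, γ⟫ :=
  lt_of_le_of_ne real_inner_self_nonneg
    (Ne.symm (fun h => root_ne_zero hΦ hγ (inner_self_eq_zero.mp h)))

lemma neg_mem (hΦ : IsIrredRootSystem Φ) {γ : V} (hγ : γ ∈ Φ) : -γ ∈ Φ := by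
  have h := hΦ.reflect_mem γ hγ γ hγ
  have h2 : γ - (2 * ⟪γ, γ⟫ / ⟪γ, γ⟫) • γ = -γ := by
    rw [mul_div_assoc, div_self (inner_self_pos' hΦ hγ).ne']
    module
  rwa [h2] at h

lemma pos_neg_incompat (hΦ : IsIrredRootSystem Φ)
    (hb : ∀ a : {x // x ∈ Δ}, b a = (a : V)) {γ : V}
    (h1 : IsPos Φ b γ) (h2 : IsPos Φ b (-γ)) : False := by
  have h3 : ∀ a : {x // x ∈ Δ}, b.repr γ a = 0 := by
    intro a
    have := h2.2 a
    rw [map_neg, Finsupp.neg_apply] at this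
    linarith [h1.2 a]
  exact root_ne_zero hΦ h1.1 (eq_zero_of_repr_zero hb h3)

lemma pos_or_neg (hΦ : IsIrredRootSystem Φ) (hΔ : IsBase Φ Δ)
    (hb : ∀ a : {x // x ∈ Δ}, b a = (a : V)) {γ : V} (hγ : γ ∈ Φ) :
    IsPos Φ b γ ∨ IsPos Φ b (-γ) := by
  obtain ⟨c, hc, hsign | hsign⟩ := hΔ.2.2 γ hγ
  · left
    refine ⟨hγ, fun a => ?_⟩
    rw [repr_eq hb (fun α => ((c α : ℤ) : ℝ)) hc a]
    exact_mod_cast hsign a.1 a.2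
  · right
    refine ⟨neg_mem hΦ hγ, fun a => ?_⟩
    have hc' : -γ = ∑ α ∈ Δ, (fun α => -((c α : ℤ) : ℝ)) α • α := by
      simp only [neg_smul]
      rw [Finset.sum_neg_distrib, ← hc]
    rw [repr_eq hb _ hc' a]
    simp only [Left.nonneg_neg_iff]
    exact_mod_cast hsign a.1 a.2

lemma pos_of_mem_not_neg (hΦ : IsIrredRootSystem Φ) (hΔ : IsBase Φ Δ)
    (hb : ∀ a : {x // x ∈ Δ}, b a = (a : V)) {γ : V} (hγ : γ ∈ Φ)
    (h : ¬ IsPos Φ b (-γ)) : IsPos Φ b γ :=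
  (pos_or_neg hΦ hΔ hb hγ).resolve_right h

end LMLP
end Ctx
namespace LMLP
section Ctx2
variable {Φ : Set V} {Δ : Finset V} {b : Module.Basis {x // x ∈ Δ} ℝ V}

lemma refl_eq_of_formula {s : V ≃ₗ[ℝ] V} {α : V}
    (h : ∀ v, s v = v - (2 * ⟪α, v⟫ / ⟪α, α⟫) • α) : s = refl α := by
  apply LinearEquiv.toLinearMap_injective
  apply LinearMap.ext
  intro v
  rw [LinearEquiv.coe_coe, LinearEquiv.coe_coe, h v, refl_apply]

lemma refl_mem_reflections {α : V} (hα : α ∈ Φ) : refl α ∈ reflections Φ :=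
  ⟨α, hα, fun v => rfl⟩

lemma refl_mem_W (hΔ : IsBase Φ Δ) {a : V} (ha : a ∈ Δ) : refl a ∈ weylGroup Φ :=
  Subgroup.subset_closure (refl_mem_reflections (hΔ.1 ha))

lemma refl_mem_simple {a : V} (ha : a ∈ Δ) : refl a ∈ simpleReflections Δ :=
  ⟨a, ha, fun v => rfl⟩

lemma simple_eq {s : V ≃ₗ[ℝ] V} (hs : s ∈ simpleReflections Δ) :
    ∃ a ∈ Δ, s = refl a := by
  obtain ⟨a, ha, h⟩ := hs
  exact ⟨a, ha, refl_eq_of_formula h⟩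

lemma W_orth {w : V ≃ₗ[ℝ] V} (hw : w ∈ weylGroup Φ) : ∀ u v, ⟪w u, w v⟫ = ⟪u, v⟫ := by
  induction hw using Subgroup.closure_induction with
  | mem x hx =>
    obtain ⟨α, hα, h⟩ := hx
    rw [refl_eq_of_formula h]
    exact refl_orth α
  | one => intro u v; rfl
  | mul x y hx hy hx' hy' =>
    intro u v
    have : (x * y) u = x (y u) := rfl
    rw [this, show (x * y) v = x (y v) from rfl, hx', hy']
  | inv x hx hx' =>
    intro u v
    have h2 := hx' (x⁻¹ u) (x⁻¹ v)
    rw [show x (x⁻¹ u) = u from x.apply_symm_apply u,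
      show x (x⁻¹ v) = v from x.apply_symm_apply v] at h2
    exact h2.symm

lemma W_root (hΦ' : IsIrredRootSystem Φ) {w : V ≃ₗ[ℝ] V} (hw : w ∈ weylGroup Φ) {γ : V} (hγ : γ ∈ Φ) : w γ ∈ Φ := by
  revert γ
  have key : ∀ w, w ∈ weylGroup Φ → (∀ γ ∈ Φ, w γ ∈ Φ) ∧ (∀ γ ∈ Φ, w⁻¹ γ ∈ Φ) := by
    intro w hw
    induction hw using Subgroup.closure_induction with
    | mem x hx =>
      obtain ⟨α, hα, h⟩ := hx
      have hx' : x = refl α := refl_eq_of_formula h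
      constructor
      · intro γ hγ
        rw [hx']
        have := hΦ'.reflect_mem α hα γ hγ
        rwa [refl_apply]
      · rw [hx', refl_inv]
        intro γ hγ
        have := hΦ'.reflect_mem α hα γ hγ
        rwa [refl_apply]
    | one => exact ⟨fun γ hγ => hγ, fun γ hγ => hγ⟩
    | mul x y hx hy hx' hy' =>
      constructor
      · intro γ hγ
        exact hx'.1 _ (hy'.1 γ hγ)
      · intro γ hγ
        rw [mul_inv_rev]
        exact hy'.2 _ (hx'.2 γ hγ)
    | inv x hx hx' => exact ⟨by rw [← inv_inv x] at hx'; exact hx'.2, by simpa using hx'.1⟩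
  exact fun γ => (key w hw).1 γ
end Ctx2
end LMLP
namespace LMLP
section Ctx3
variable {Φ : Set V} {Δ : Finset V} {b : Module.Basis {x // x ∈ Δ} ℝ V}

lemma refl_refl_apply (α v : V) : refl α (refl α v) = v := rlin_invol α v

lemma pos_simple (hΦ : IsIrredRootSystem Φ) (hΔ : IsBase Φ Δ)
    (hb : ∀ a : {x // x ∈ Δ}, b a = (a : V)) {a : V} (ha : a ∈ Δ) : IsPos Φ b a := by
  classical
  refine ⟨hΔ.1 ha, fun a' => ?_⟩
  rw [show (a : V) = b ⟨a, ha⟩ from (hb ⟨a, ha⟩).symm, b.repr_self, Finsupp.single_apply]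
  split <;> norm_num

lemma repr_simple_other (hb : ∀ a : {x // x ∈ Δ}, b a = (a : V)) {a : V} (ha : a ∈ Δ)
    {a' : {x // x ∈ Δ}} (hne : a' ≠ ⟨a, ha⟩) : b.repr a a' = 0 := by
  classical
  rw [show (a : V) = b ⟨a, ha⟩ from (hb ⟨a, ha⟩).symm, b.repr_self, Finsupp.single_apply,
    if_neg (fun h => hne h.symm)]

lemma simple_perm (hΦ : IsIrredRootSystem Φ) (hΔ : IsBase Φ Δ)
    (hb : ∀ a : {x // x ∈ Δ}, b a = (a : V)) {a β : V} (ha : a ∈ Δ)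
    (hβ : IsPos Φ b β) (hne : β ≠ a) : IsPos Φ b (refl a β) ∧ refl a β ≠ a := by
  have haΦ : a ∈ Φ := hΔ.1 ha
  have hmem : refl a β ∈ Φ := by
    have := hΦ.reflect_mem a haΦ β hβ.1
    rwa [← refl_apply] at this
  have hrepr : ∀ a' : {x // x ∈ Δ}, a' ≠ ⟨a, ha⟩ →
      b.repr (refl a β) a' = b.repr β a' := by
    intro a' hne'
    rw [refl_apply, map_sub, map_smul, Finsupp.sub_apply, Finsupp.smul_apply,
      repr_simple_other hb ha hne']
    simp
  have hnotnegA : ¬ β = -a := by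
    intro h
    have hβ' := hβ
    rw [h] at hβ'
    exact pos_neg_incompat hΦ hb (pos_simple hΦ hΔ hb ha) hβ'
  have hposr : IsPos Φ b (refl a β) := by
    rcases pos_or_neg hΦ hΔ hb hmem with h | h
    · exact h
    · exfalso
      have hzero : ∀ a' : {x // x ∈ Δ}, a' ≠ ⟨a, ha⟩ → b.repr β a' = 0 := by
        intro a' hne'
        have h1 := hβ.2 a'
        have h2 := h.2 a'
        rw [map_neg, Finsupp.neg_apply, hrepr a' hne'] at h2
        linarith
      have hβa : β = b.repr β ⟨a, ha⟩ • a := by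
        conv_lhs => rw [sum_repr hb β]
        rw [Finset.sum_eq_single (⟨a, ha⟩ : {x // x ∈ Δ})]
        · intro a' _ hne'
          rw [hzero a' hne', zero_smul]
        · intro h'
          exact absurd (Finset.mem_univ _) h'
      rcases hΦ.reduced a haΦ _ (hβa ▸ hβ.1) with h1 | h1
      · rw [h1, one_smul] at hβa
        exact hne hβa
      · rw [h1, neg_one_smul] at hβa
        exact hnotnegA hβa
  refine ⟨hposr, fun h => ?_⟩
  have : β = -a := by
    rw [← refl_refl_apply a β, h, refl_apply_self a (inner_self_pos' hΦ haΦ).ne']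
  exact hnotnegA this

/-- Inversion set. -/
def InvSet (Φ : Set V) (b : Module.Basis {x // x ∈ Δ} ℝ V) (w : V ≃ₗ[ℝ] V) : Set V :=
  {β | IsPos Φ b β ∧ IsPos Φ b (-(w β))}

/-- Inversion number. -/
noncomputable def nInv (Φ : Set V) (b : Module.Basis {x // x ∈ Δ} ℝ V) (w : V ≃ₗ[ℝ] V) : ℕ :=
  (InvSet Φ b w).ncard

lemma invSet_finite (hΦ : IsIrredRootSystem Φ) (w : V ≃ₗ[ℝ] V) :
    (InvSet Φ b w).Finite := hΦ.finite.subset fun β hβ => hβ.1.1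

lemma invSet_one (hΦ : IsIrredRootSystem Φ)
    (hb : ∀ a : {x // x ∈ Δ}, b a = (a : V)) : InvSet Φ b (1 : V ≃ₗ[ℝ] V) = ∅ := by
  ext β
  simp only [Set.mem_empty_iff_false, iff_false, InvSet, Set.mem_setOf_eq]
  rintro ⟨h1, h2⟩
  exact pos_neg_incompat hΦ hb h1 (by rwa [show (1 : V ≃ₗ[ℝ] V) β = β from rfl] at h2)

lemma nInv_mul_refl_pos (hΦ : IsIrredRootSystem Φ) (hΔ : IsBase Φ Δ)
    (hb : ∀ a : {x // x ∈ Δ}, b a = (a : V)) {w : V ≃ₗ[ℝ] V} {a : V}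
    (hw : w ∈ weylGroup Φ) (ha : a ∈ Δ) (hpos : IsPos Φ b (w a)) :
    nInv Φ b (w * refl a) = nInv Φ b w + 1 := by
  have haΦ : a ∈ Φ := hΔ.1 ha
  have hra : refl a a = -a := refl_apply_self a (inner_self_pos' hΦ haΦ).ne'
  have hset : InvSet Φ b (w * refl a) = insert a ((refl a) '' (InvSet Φ b w)) := by
    ext β
    rw [Set.mem_insert_iff]
    constructor
    · rintro ⟨hβ, hneg⟩
      by_cases hba : β = a
      · exact Or.inl hba
      · right
        refine ⟨refl a β, ⟨(simple_perm hΦ hΔ hb ha hβ hba).1, ?_⟩, refl_refl_apply a β⟩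
        exact hneg
    · rintro (hba | ⟨γ, ⟨hγpos, hγneg⟩, hγeq⟩)
      · rw [hba]
        refine ⟨pos_simple hΦ hΔ hb ha, ?_⟩
        have h3 : (w * refl a) a = -(w a) := by
          rw [show (w * refl a) a = w (refl a a) from rfl, hra, map_neg]
        rw [h3, neg_neg]
        exact hpos
      · have hγa : γ ≠ a := by
          intro h
          rw [h] at hγneg
          exact pos_neg_incompat hΦ hb hpos hγneg
        rw [← hγeq]
        refine ⟨(simple_perm hΦ hΔ hb ha hγpos hγa).1, ?_⟩
        have h3 : (w * refl a) (refl a γ) = w γ := by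
          rw [show (w * refl a) (refl a γ) = w (refl a (refl a γ)) from rfl, refl_refl_apply]
        rwa [h3]
  have hnm : a ∉ (refl a) '' (InvSet Φ b w) := by
    rintro ⟨γ, ⟨hγpos, _⟩, hγeq⟩
    have : γ = -a := by
      rw [← refl_refl_apply a γ, hγeq, hra]
    rw [this] at hγpos
    exact pos_neg_incompat hΦ hb (pos_simple hΦ hΔ hb ha) hγpos
  rw [nInv, nInv, hset, Set.ncard_insert_of_notMem hnm
    (((invSet_finite hΦ w).image _)),
    Set.ncard_image_of_injective _ (refl a).injective]

lemma nInv_mul_refl_neg (hΦ : IsIrredRootSystem Φ) (hΔ : IsBase Φ Δ)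
    (hb : ∀ a : {x // x ∈ Δ}, b a = (a : V)) {w : V ≃ₗ[ℝ] V} {a : V}
    (hw : w ∈ weylGroup Φ) (ha : a ∈ Δ) (hneg : IsPos Φ b (-(w a))) :
    nInv Φ b w = nInv Φ b (w * refl a) + 1 := by
  have haΦ : a ∈ Φ := hΔ.1 ha
  have h1 : IsPos Φ b ((w * refl a) a) := by
    have h2 : (w * refl a) a = -(w a) := by
      rw [show (w * refl a) a = w (refl a a) from rfl,
        refl_apply_self a (inner_self_pos' hΦ haΦ).ne', map_neg]
    rwa [h2]
  have h2 := nInv_mul_refl_pos hΦ hΔ hb (mul_mem hw (refl_mem_W hΔ ha)) ha h1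
  rwa [mul_assoc, refl_mul_self, mul_one] at h2

end Ctx3
end LMLP
namespace LMLP
section Ctx4
variable {Φ : Set V} {Δ : Finset V} {b : Module.Basis {x // x ∈ Δ} ℝ V}

lemma prod_mem_W (hΔ : IsBase Φ Δ) :
    ∀ L : List (V ≃ₗ[ℝ] V), (∀ s ∈ L, s ∈ simpleReflections Δ) → L.prod ∈ weylGroup Φ := by
  intro L
  induction L with
  | nil => intro _; rw [List.prod_nil]; exact one_mem _
  | cons s M ih =>
    intro h
    rw [List.prod_cons]
    obtain ⟨a, ha, hs⟩ := simple_eq (h s List.mem_cons_self)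
    exact mul_mem (hs ▸ refl_mem_W hΔ ha) (ih fun x hx => h x (List.mem_cons_of_mem _ hx))

lemma refl_conj {w : V ≃ₗ[ℝ] V} (hw : w ∈ weylGroup Φ) (α : V) :
    refl (w α) = w * refl α * w⁻¹ := by
  apply LinearEquiv.toLinearMap_injective
  apply LinearMap.ext
  intro v
  show refl (w α) v = (w * refl α * w⁻¹) v
  have h1 : (w * refl α * w⁻¹) v = w (refl α (w⁻¹ v)) := rfl
  have h2 : ⟪w α, v⟫ = ⟪α, w⁻¹ v⟫ := by
    have h3 := W_orth hw α (w⁻¹ v)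
    rwa [show w (w⁻¹ v) = v from w.apply_symm_apply v] at h3
  rw [h1, refl_apply, refl_apply, map_sub, map_smul,
    show w (w⁻¹ v) = v from w.apply_symm_apply v, h2, W_orth hw α α]

lemma exchange (hΦ : IsIrredRootSystem Φ) (hΔ : IsBase Φ Δ)
    (hb : ∀ a : {x // x ∈ Δ}, b a = (a : V)) :
    ∀ L : List (V ≃ₗ[ℝ] V), (∀ s ∈ L, s ∈ simpleReflections Δ) →
    ∀ a, a ∈ Δ → IsPos Φ b (-(L.prod a)) →
    ∃ i < L.length, L.prod * refl a = (L.eraseIdx i).prod := by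
  intro L
  induction L with
  | nil =>
    intro _ a ha hneg
    exact (pos_neg_incompat hΦ hb (pos_simple hΦ hΔ hb ha) hneg).elim
  | cons s M ih =>
    intro hL a ha hneg
    obtain ⟨c, hc, hs⟩ := simple_eq (hL s List.mem_cons_self)
    have hM : ∀ x ∈ M, x ∈ simpleReflections Δ := fun x hx => hL x (List.mem_cons_of_mem _ hx)
    have hMw := prod_mem_W hΔ M hM
    rcases pos_or_neg hΦ hΔ hb (W_root hΦ hMw (hΔ.1 ha)) with hp | hn
    · have hLa : (s :: M).prod a = s (M.prod a) := by rw [List.prod_cons]; rfl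
      rw [hLa, hs] at hneg
      have hMac : M.prod a = c := by
        by_contra hne
        exact pos_neg_incompat hΦ hb (simple_perm hΦ hΔ hb hc hp hne).1 hneg
      have hconj : refl c = M.prod * refl a * (M.prod)⁻¹ := by
        rw [← hMac]
        exact refl_conj hMw a
      refine ⟨0, Nat.succ_pos _, ?_⟩
      have key : refl c * (M.prod * refl a) = M.prod := by
        rw [hconj]
        calc M.prod * refl a * (M.prod)⁻¹ * (M.prod * refl a)
            = M.prod * (refl a * refl a) := by group
          _ = M.prod := by rw [refl_mul_self, mul_one]
      show (s :: M).prod * refl a = M.prod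
      rw [List.prod_cons, hs, mul_assoc, key]
    · obtain ⟨i, hi, hip⟩ := ih hM a ha hn
      refine ⟨i + 1, Nat.succ_lt_succ hi, ?_⟩
      show (s :: M).prod * refl a = (s :: M.eraseIdx i).prod
      rw [List.prod_cons, List.prod_cons, mul_assoc, hip]

lemma find_desc (hΦ : IsIrredRootSystem Φ) (hΔ : IsBase Φ Δ)
    (hb : ∀ a : {x // x ∈ Δ}, b a = (a : V)) :
    ∀ L : List (V ≃ₗ[ℝ] V), (∀ s ∈ L, s ∈ simpleReflections Δ) →
    nInv Φ b L.prod < L.length →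
    ∃ A c B, c ∈ Δ ∧ L = A ++ refl c :: B ∧ (∀ s ∈ A, s ∈ simpleReflections Δ) ∧
      IsPos Φ b (-(A.prod c)) := by
  intro L
  induction L using List.reverseRecOn with
  | nil => intro _ h; simp at h
  | append_singleton M s ih =>
    intro hL hlt
    obtain ⟨c, hc, hs⟩ := simple_eq (hL s (by simp))
    have hM : ∀ x ∈ M, x ∈ simpleReflections Δ := fun x hx => hL x (by simp [hx])
    have hMw := prod_mem_W hΔ M hM
    rcases pos_or_neg hΦ hΔ hb (W_root hΦ hMw (hΔ.1 hc)) with hp | hn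
    · have h2 : (M ++ [s]).prod = M.prod * refl c := by
        rw [List.prod_append, List.prod_singleton, hs]
      rw [h2, nInv_mul_refl_pos hΦ hΔ hb hMw hc hp] at hlt
      have h3 : nInv Φ b M.prod < M.length := by
        rw [List.length_append, List.length_singleton] at hlt
        omega
      obtain ⟨A, c', B, hc', heq, hA, hneg⟩ := ih hM h3
      exact ⟨A, c', B ++ [s], hc', by rw [heq]; simp, hA, hneg⟩
    · exact ⟨M, c, [], hc, by rw [hs], hM, hn⟩

lemma nInv_prod_le (hΦ : IsIrredRootSystem Φ) (hΔ : IsBase Φ Δ)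
    (hb : ∀ a : {x // x ∈ Δ}, b a = (a : V)) :
    ∀ L : List (V ≃ₗ[ℝ] V), (∀ s ∈ L, s ∈ simpleReflections Δ) →
    nInv Φ b L.prod ≤ L.length := by
  intro L
  induction L using List.reverseRecOn with
  | nil =>
    intro _
    rw [List.prod_nil, nInv, invSet_one hΦ hb, Set.ncard_empty]
    exact Nat.zero_le _
  | append_singleton M s ih =>
    intro h
    obtain ⟨a, ha, hs⟩ := simple_eq (h s (by simp))
    have hM : ∀ x ∈ M, x ∈ simpleReflections Δ := fun x hx => h x (by simp [hx])
    have hMw := prod_mem_W hΔ M hM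
    have h2 := ih hM
    rw [List.prod_append, List.prod_singleton, List.length_append, List.length_singleton, hs]
    rcases pos_or_neg hΦ hΔ hb (W_root hΦ hMw (hΔ.1 ha)) with hp | hn
    · rw [nInv_mul_refl_pos hΦ hΔ hb hMw ha hp]
      omega
    · have h3 := nInv_mul_refl_neg hΦ hΔ hb hMw ha hn
      omega

lemma len_le_of_expr (L : List (V ≃ₗ[ℝ] V)) (hL : ∀ s ∈ L, s ∈ simpleReflections Δ) :
    len Δ L.prod ≤ L.length :=
  Nat.sInf_le ⟨L, hL, rfl, rfl⟩

lemma len_le_nInv (hΦ : IsIrredRootSystem Φ) (hΔ : IsBase Φ Δ)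
    (hb : ∀ a : {x // x ∈ Δ}, b a = (a : V)) :
    ∀ n, ∀ L : List (V ≃ₗ[ℝ] V), L.length ≤ n → (∀ s ∈ L, s ∈ simpleReflections Δ) →
    len Δ L.prod ≤ nInv Φ b L.prod := by
  intro n
  induction n with
  | zero =>
    intro L hn _
    rw [List.eq_nil_of_length_eq_zero (Nat.le_zero.mp hn), List.prod_nil]
    have h0 : len Δ (1 : V ≃ₗ[ℝ] V) ≤ 0 := Nat.sInf_le ⟨[], by simp, rfl, rfl⟩
    omega
  | succ n ih =>
    intro L hn hL
    by_cases hlt : nInv Φ b L.prod < L.length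
    · obtain ⟨A, c, B, hc, heq, hA, hneg⟩ := find_desc hΦ hΔ hb L hL hlt
      obtain ⟨i, hi, hip⟩ := exchange hΦ hΔ hb A hA c hc hneg
      have hL' : ∀ x ∈ A.eraseIdx i ++ B, x ∈ simpleReflections Δ := by
        intro x hx
        rcases List.mem_append.mp hx with h | h
        · exact hA x (List.eraseIdx_subset h)
        · exact hL x (by rw [heq]; simp [h])
      have hprod : (A.eraseIdx i ++ B).prod = L.prod := by
        rw [heq, List.prod_append, List.prod_append, List.prod_cons, ← hip]
        group
      have hlen : (A.eraseIdx i ++ B).length ≤ n := by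
        rw [heq] at hn
        rw [List.length_append, List.length_eraseIdx, if_pos hi]
        rw [List.length_append, List.length_cons] at hn
        omega
      have h4 := ih (A.eraseIdx i ++ B) hlen hL'
      rwa [hprod] at h4
    · push_neg at hlt
      exact le_trans (len_le_of_expr L hL) hlt

lemma len_eq_nInv (hΦ : IsIrredRootSystem Φ) (hΔ : IsBase Φ Δ)
    (hb : ∀ a : {x // x ∈ Δ}, b a = (a : V))
    (L : List (V ≃ₗ[ℝ] V)) (hL : ∀ s ∈ L, s ∈ simpleReflections Δ) :
    len Δ L.prod = nInv Φ b L.prod :=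
  le_antisymm (len_le_nInv hΦ hΔ hb L.length L le_rfl hL) (by
    obtain ⟨L0, hL0, hlen, hprod⟩ := Nat.sInf_mem
      (⟨L.length, L, hL, rfl, rfl⟩ : Set.Nonempty {n | ∃ L' : List (V ≃ₗ[ℝ] V),
        (∀ s ∈ L', s ∈ simpleReflections Δ) ∧ L'.length = n ∧ L'.prod = L.prod})
    calc nInv Φ b L.prod = nInv Φ b L0.prod := by rw [hprod]
      _ ≤ L0.length := nInv_prod_le hΦ hΔ hb L0 hL0
      _ = len Δ L.prod := hlen)

lemma eq_one_of_nInv_zero (hΦ : IsIrredRootSystem Φ) (hΔ : IsBase Φ Δ)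
    (hb : ∀ a : {x // x ∈ Δ}, b a = (a : V))
    (L : List (V ≃ₗ[ℝ] V)) (hL : ∀ s ∈ L, s ∈ simpleReflections Δ)
    (h : nInv Φ b L.prod = 0) : L.prod = 1 := by
  have h1 : len Δ L.prod = 0 := by rw [len_eq_nInv hΦ hΔ hb L hL]; exact h
  have h2 := Nat.sInf_mem
    (⟨L.length, L, hL, rfl, rfl⟩ : Set.Nonempty {n | ∃ L' : List (V ≃ₗ[ℝ] V),
      (∀ s ∈ L', s ∈ simpleReflections Δ) ∧ L'.length = n ∧ L'.prod = L.prod})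
  rw [show sInf {n | ∃ L' : List (V ≃ₗ[ℝ] V),
      (∀ s ∈ L', s ∈ simpleReflections Δ) ∧ L'.length = n ∧ L'.prod = L.prod} = len Δ L.prod
    from rfl, h1] at h2
  obtain ⟨L0, _, hlen0, hprod0⟩ := h2
  rw [← hprod0, List.eq_nil_of_length_eq_zero hlen0, List.prod_nil]

end Ctx4
end LMLP
namespace LMLP
section Ctx5
variable {Φ : Set V} {Δ : Finset V} {b : Module.Basis {x // x ∈ Δ} ℝ V}

lemma sum_root (hΦ : IsIrredRootSystem Φ) {α β : V} (hα : α ∈ Φ) (hβ : β ∈ Φ)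
    (hinner : ⟪α, β⟫ < 0) (hne : α + β ≠ 0) : α + β ∈ Φ := by
  have hαα := inner_self_pos' hΦ hα
  have hββ := inner_self_pos' hΦ hβ
  obtain ⟨m, hm⟩ := hΦ.crystallographic β hβ α hα
  obtain ⟨n, hn⟩ := hΦ.crystallographic α hα β hβ
  rw [real_inner_comm α β] at hm
  have hm0 : (m : ℝ) < 0 := by
    rw [← hm]
    exact div_neg_of_neg_of_pos (by linarith) hββ
  have hn0 : (n : ℝ) < 0 := by
    rw [← hn]
    exact div_neg_of_neg_of_pos (by linarith) hαα
  by_cases hdep : ∃ r : ℝ, β = r • α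
  · obtain ⟨r, hr⟩ := hdep
    rcases hΦ.reduced α hα r (hr ▸ hβ) with h1 | h1
    · rw [h1, one_smul] at hr
      rw [hr] at hinner
      linarith
    · rw [h1, neg_one_smul] at hr
      rw [hr] at hne
      simp at hne
  · have hcs : ⟪α, β⟫ * ⟪α, β⟫ < ⟪α, α⟫ * ⟪β, β⟫ := by
      have hα0 : α ≠ 0 := root_ne_zero hΦ hα
      have hstr : ⟪-α, β⟫ < ‖(-α : V)‖ * ‖β‖ := by
        rw [inner_lt_norm_mul_iff_real]
        intro hcontra
        apply hdep
        have hcontra' : ‖β‖ • (-α) = ‖α‖ • β := by rwa [norm_neg] at hcontra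
        refine ⟨-(‖β‖ / ‖α‖), ?_⟩
        have key : ‖α‖ • β = ‖α‖ • ((-(‖β‖ / ‖α‖)) • α) := by
          rw [← hcontra', smul_smul,
            show ‖α‖ * -(‖β‖ / ‖α‖) = -‖β‖ by
              rw [mul_neg, mul_div_cancel₀ _ (norm_ne_zero_iff.mpr hα0)]]
          rw [smul_neg, neg_smul]
        exact smul_right_injective V (norm_ne_zero_iff.mpr hα0) key
      rw [inner_neg_left, norm_neg] at hstr
      have h0ip : (0 : ℝ) ≤ -⟪α, β⟫ := by linarith
      have hsq := mul_self_lt_mul_self h0ip hstr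
      rw [real_inner_self_eq_norm_mul_norm, real_inner_self_eq_norm_mul_norm]
      nlinarith [norm_nonneg α, norm_nonneg β]
    have hprod : (m : ℝ) * n < 4 := by
      have h6 : ((m : ℝ) * n) * (⟪β, β⟫ * ⟪α, α⟫) = 4 * (⟪α, β⟫ * ⟪α, β⟫) := by
        rw [← hm, ← hn]
        field_simp
        ring
      nlinarith
    have hcase : m = -1 ∨ n = -1 := by
      have hm1 : m ≤ -1 := by
        have : m < 0 := by exact_mod_cast hm0
        omega
      have hn1 : n ≤ -1 := by
        have : n < 0 := by exact_mod_cast hn0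
        omega
      by_contra hcon
      push_neg at hcon
      have h7 : m ≤ -2 := by omega
      have h8 : n ≤ -2 := by omega
      have h9 : (4 : ℝ) ≤ (m : ℝ) * n := by
        have : (4 : ℤ) ≤ m * n := by nlinarith
        exact_mod_cast this
      linarith
    rcases hcase with h1 | h1
    · have h2 := hΦ.reflect_mem β hβ α hα
      rw [real_inner_comm α β, hm, h1] at h2
      rw [show α - ((-1 : ℤ) : ℝ) • β = α + β by push_cast; module] at h2
      exact h2
    · have h2 := hΦ.reflect_mem α hα β hβ
      rw [hn, h1] at h2
      rw [show β - ((-1 : ℤ) : ℝ) • α = α + β by push_cast; module] at h2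
      exact h2
end Ctx5
end LMLP
namespace LMLP
section Ctx6
variable {Φ : Set V} {Δ : Finset V} {b : Module.Basis {x // x ∈ Δ} ℝ V}

lemma repr_highest_sub_nonneg (hb : ∀ a : {x // x ∈ Δ}, b a = (a : V)) {t : V}
    (ht : IsHighestRoot Φ Δ t) {α : V} (hα : α ∈ Φ) (a : {x // x ∈ Δ}) :
    0 ≤ b.repr (t - α) a := by
  obtain ⟨c, hc⟩ := ht.2 α hα
  rw [repr_eq hb (fun α => ((c α : ℕ) : ℝ)) hc a]
  positivity

lemma highest_pos (hΦ : IsIrredRootSystem Φ) (hΔ : IsBase Φ Δ)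
    (hb : ∀ a : {x // x ∈ Δ}, b a = (a : V)) {t : V} (ht : IsHighestRoot Φ Δ t) :
    IsPos Φ b t := by
  obtain ⟨γ, hγ⟩ := hΦ.nonempty
  have hex : ∃ α, IsPos Φ b α := by
    rcases pos_or_neg hΦ hΔ hb hγ with h | h
    · exact ⟨γ, h⟩
    · exact ⟨-γ, h⟩
  obtain ⟨α, hα⟩ := hex
  refine ⟨ht.1, fun a => ?_⟩
  have h1 := repr_highest_sub_nonneg hb ht hα.1 a
  have h2 := hα.2 a
  have h3 : b.repr t a = b.repr (t - α) a + b.repr α a := by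
    rw [map_sub, Finsupp.sub_apply]
    ring
  linarith

lemma inner_t_nonneg (hΦ : IsIrredRootSystem Φ) (hΔ : IsBase Φ Δ)
    (hb : ∀ a : {x // x ∈ Δ}, b a = (a : V)) {t : V} (ht : IsHighestRoot Φ Δ t)
    {β : V} (hβ : IsPos Φ b β) : 0 ≤ ⟪t, β⟫ := by
  by_contra h
  push_neg at h
  have htβ : t + β ≠ 0 := by
    intro h0
    have hβt : β = -t := by linear_combination (norm := module) h0
    rw [hβt] at hβ
    exact pos_neg_incompat hΦ hb (highest_pos hΦ hΔ hb ht) hβ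
  have hmem : t + β ∈ Φ := sum_root hΦ ht.1 hβ.1 h htβ
  have h1 := repr_highest_sub_nonneg hb ht hmem
  have h2 : ∀ a : {x // x ∈ Δ}, b.repr β a = 0 := by
    intro a
    have h3 := h1 a
    rw [show t - (t + β) = -β by module, map_neg, Finsupp.neg_apply] at h3
    have h4 := hβ.2 a
    linarith
  exact root_ne_zero hΦ hβ.1 (eq_zero_of_repr_zero hb h2)

lemma pos_of_inner_t_pos (hΦ : IsIrredRootSystem Φ) (hΔ : IsBase Φ Δ)
    (hb : ∀ a : {x // x ∈ Δ}, b a = (a : V)) {t : V} (ht : IsHighestRoot Φ Δ t)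
    {β : V} (hβΦ : β ∈ Φ) (h : 0 < ⟪t, β⟫) : IsPos Φ b β := by
  rcases pos_or_neg hΦ hΔ hb hβΦ with h1 | h1
  · exact h1
  · have h2 := inner_t_nonneg hΦ hΔ hb ht h1
    rw [inner_neg_right] at h2
    linarith

/-- Applying the reflection in `t` to a positive root not orthogonal to `t`. -/
lemma st_neg (hΦ : IsIrredRootSystem Φ) (hΔ : IsBase Φ Δ)
    (hb : ∀ a : {x // x ∈ Δ}, b a = (a : V)) {t : V} (ht : IsHighestRoot Φ Δ t)
    {β : V} (hβ : IsPos Φ b β) (h : 0 < ⟪t, β⟫) :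
    IsPos Φ b (-(refl t β)) ∧ 0 < ⟪t, -(refl t β)⟫ := by
  have htt := inner_self_pos' hΦ ht.1
  have hmem : refl t β ∈ Φ := by
    have := hΦ.reflect_mem t ht.1 β hβ.1
    rwa [← refl_apply] at this
  obtain ⟨kz, hkz⟩ := hΦ.crystallographic t ht.1 β hβ.1
  set k : ℝ := 2 * ⟪t, β⟫ / ⟪t, t⟫ with hk
  have hkpos : 0 < k := by positivity
  have hk1 : (1 : ℝ) ≤ k := by
    rw [hkz]
    have h0 : (0 : ℤ) < kz := by exact_mod_cast hkz ▸ hkpos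
    exact_mod_cast h0
  have hinner : ⟪t, refl t β⟫ = -⟪t, β⟫ := by
    rw [refl_apply, inner_sub_right, real_inner_smul_right, ← hk]
    rw [hk, div_mul_cancel₀ _ htt.ne']
    ring
  have hreprle : ∀ a : {x // x ∈ Δ}, b.repr (refl t β) a ≤ 0 := by
    intro a
    have h1 : b.repr (refl t β) a = b.repr β a - k * b.repr t a := by
      rw [refl_apply, map_sub, Finsupp.sub_apply, map_smul, Finsupp.smul_apply, ← hk]
      rfl
    have h2 : b.repr β a ≤ b.repr t a := by
      have h3 := repr_highest_sub_nonneg hb ht hβ.1 a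
      rw [map_sub, Finsupp.sub_apply] at h3
      linarith
    have h4 : 0 ≤ b.repr t a := (highest_pos hΦ hΔ hb ht).2 a
    nlinarith
  have hneg : IsPos Φ b (-(refl t β)) := by
    rcases pos_or_neg hΦ hΔ hb hmem with h1 | h1
    · exfalso
      have h2 : ∀ a : {x // x ∈ Δ}, b.repr (refl t β) a = 0 :=
        fun a => le_antisymm (hreprle a) (h1.2 a)
      exact root_ne_zero hΦ hmem (eq_zero_of_repr_zero hb h2)
    · exact h1
  refine ⟨hneg, ?_⟩
  rw [inner_neg_right, hinner]
  linarith

lemma st_fix {t β : V} (h : ⟪t, β⟫ = 0) : refl t β = β := by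
  rw [refl_apply, h]
  simp

/-- Every positive root is in the orbit of a simple root under a product of
simple reflections. -/
lemma pos_reachable (hΦ : IsIrredRootSystem Φ) (hΔ : IsBase Φ Δ)
    (hb : ∀ a : {x // x ∈ Δ}, b a = (a : V)) :
    ∀ n : ℕ, ∀ β, IsPos Φ b β → (∑ a : {x // x ∈ Δ}, b.repr β a) ≤ n →
    ∃ (L : List (V ≃ₗ[ℝ] V)) (c : V), (∀ s ∈ L, s ∈ simpleReflections Δ) ∧ c ∈ Δ ∧
      L.prod c = β := by
  intro n
  induction n with
  | zero =>
    intro β hβ hht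
    exfalso
    have h1 : (∑ a : {x // x ∈ Δ}, b.repr β a) = 0 :=
      le_antisymm (by exact_mod_cast hht) (Finset.sum_nonneg fun a _ => hβ.2 a)
    have h2 := (Finset.sum_eq_zero_iff_of_nonneg (fun a _ => hβ.2 a)).mp h1
    exact root_ne_zero hΦ hβ.1 (eq_zero_of_repr_zero hb (fun a => h2 a (Finset.mem_univ a)))
  | succ n ih =>
    classical
    intro β hβ hht
    by_cases hβΔ : β ∈ Δ
    · exact ⟨[], β, by simp, hβΔ, rfl⟩
    · have hex : ∃ a : {x // x ∈ Δ}, 0 < ⟪β, (a : V)⟫ := by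
        by_contra hno
        push_neg at hno
        have h0 : ⟪β, β⟫ ≤ 0 := by
          conv_lhs => rw [show ⟪β, β⟫ = ⟪β, ∑ a : {x // x ∈ Δ}, b.repr β a • (a : V)⟫ by
            rw [← sum_repr hb β]]
          rw [inner_sum]
          refine Finset.sum_nonpos fun a _ => ?_
          rw [real_inner_smul_right]
          exact mul_nonpos_of_nonneg_of_nonpos (hβ.2 a) (hno a)
        exact absurd h0 (not_le.mpr (inner_self_pos' hΦ hβ.1))
      obtain ⟨a, hia⟩ := hex
      have hane : β ≠ (a : V) := fun h => hβΔ (h ▸ a.2)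
      obtain ⟨hpos', hne'⟩ := simple_perm hΦ hΔ hb a.2 hβ hane
      obtain ⟨kz, hkz⟩ := hΦ.crystallographic a (hΔ.1 a.2) β hβ.1
      set k : ℝ := 2 * ⟪(a : V), β⟫ / ⟪(a : V), (a : V)⟫ with hk
      have hkpos : 0 < k := by
        rw [hk, real_inner_comm]
        have := inner_self_pos' hΦ (hΔ.1 a.2)
        positivity
      have hk1 : (1 : ℝ) ≤ k := by
        rw [hkz]
        have h0 : (0 : ℤ) < kz := by exact_mod_cast hkz ▸ hkpos
        exact_mod_cast h0
      have hsum : (∑ a' : {x // x ∈ Δ}, b.repr (refl (a : V) β) a')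
          = (∑ a' : {x // x ∈ Δ}, b.repr β a') - k := by
        have h1 : ∀ a' : {x // x ∈ Δ}, b.repr (refl (a : V) β) a'
            = b.repr β a' - k * b.repr (a : V) a' := by
          intro a'
          rw [refl_apply, map_sub, Finsupp.sub_apply, map_smul, Finsupp.smul_apply, ← hk]
          rfl
        rw [Finset.sum_congr rfl (fun a' _ => h1 a'), Finset.sum_sub_distrib,
          ← Finset.mul_sum]
        have h2 : (∑ a' : {x // x ∈ Δ}, b.repr (a : V) a') = 1 := by
          rw [Finset.sum_eq_single a]
          · rw [← hb a, b.repr_self, Finsupp.single_apply, if_pos rfl]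
          · intro a' _ hne2
            exact repr_simple_other hb a.2 (by simpa using hne2)
          · intro h'
            exact absurd (Finset.mem_univ _) h'
        rw [h2, mul_one]
      have hle : (∑ a' : {x // x ∈ Δ}, b.repr (refl (a : V) β) a') ≤ n := by
        rw [hsum]
        push_cast at hht ⊢
        linarith
      obtain ⟨L, c, hL, hc, hLc⟩ := ih (refl (a : V) β) hpos' hle
      refine ⟨refl (a : V) :: L, c, ?_, hc, ?_⟩
      · intro s hsmem
        rcases List.mem_cons.mp hsmem with h | h
        · rw [h]
          exact refl_mem_simple a.2
        · exact hL s h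
      · rw [List.prod_cons]
        show refl (a : V) (L.prod c) = β
        rw [hLc]
        exact refl_refl_apply (a : V) β

lemma prod_reverse_inv {L : List (V ≃ₗ[ℝ] V)} (hL : ∀ s ∈ L, s ∈ simpleReflections Δ) :
    (L.prod)⁻¹ = L.reverse.prod := by
  induction L with
  | nil => simp
  | cons s M ih =>
    obtain ⟨a, ha, hs⟩ := simple_eq (hL s List.mem_cons_self)
    rw [List.prod_cons, mul_inv_rev, ih (fun x hx => hL x (List.mem_cons_of_mem _ hx)),
      List.reverse_cons, List.prod_append, List.prod_singleton, hs, refl_inv]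

lemma refl_pos_expr (hΦ : IsIrredRootSystem Φ) (hΔ : IsBase Φ Δ)
    (hb : ∀ a : {x // x ∈ Δ}, b a = (a : V)) {β : V} (hβ : IsPos Φ b β) :
    ∃ L : List (V ≃ₗ[ℝ] V), (∀ s ∈ L, s ∈ simpleReflections Δ) ∧ L.prod = refl β := by
  obtain ⟨n, hn⟩ := exists_nat_ge (∑ a : {x // x ∈ Δ}, b.repr β a)
  obtain ⟨L, c, hL, hc, hLc⟩ := pos_reachable hΦ hΔ hb n β hβ hn
  refine ⟨L ++ [refl c] ++ L.reverse, ?_, ?_⟩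
  · intro s hsmem
    rcases List.mem_append.mp hsmem with h | h
    · rcases List.mem_append.mp h with h' | h'
      · exact hL s h'
      · rw [List.mem_singleton.mp h']
        exact refl_mem_simple hc
    · exact hL s (List.mem_reverse.mp h)
  · rw [List.prod_append, List.prod_append, List.prod_singleton,
      ← prod_reverse_inv hL, ← hLc]
    exact (refl_conj (prod_mem_W hΔ L hL) c).symm

end Ctx6
end LMLP
namespace LMLP
section Ctx7
variable {Φ : Set V} {Δ : Finset V} {b : Module.Basis {x // x ∈ Δ} ℝ V} {t : V}

lemma parab_le_W (hΔ : IsBase Φ Δ) :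
    parabolic {α : V | α ∈ Δ ∧ ⟪t, α⟫ = 0} ≤ weylGroup Φ := by
  refine (Subgroup.closure_le _).mpr ?_
  rintro w ⟨α, ⟨hαΔ, -⟩, h⟩
  exact Subgroup.subset_closure ⟨α, hΔ.1 hαΔ, h⟩

lemma refl_parab_mem {a : V} (ha : a ∈ Δ) (hat : ⟪t, a⟫ = 0) :
    refl a ∈ parabolic {α : V | α ∈ Δ ∧ ⟪t, α⟫ = 0} :=
  Subgroup.subset_closure ⟨a, ⟨ha, hat⟩, fun v => rfl⟩

lemma parab_fix_t {w : V ≃ₗ[ℝ] V}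
    (hw : w ∈ parabolic {α : V | α ∈ Δ ∧ ⟪t, α⟫ = 0}) : w t = t := by
  induction hw using Subgroup.closure_induction with
  | mem x hx =>
    obtain ⟨α, ⟨hαΔ, hαt⟩, h⟩ := hx
    rw [h t, show ⟪α, t⟫ = 0 by rw [real_inner_comm]; exact hαt]
    simp
  | one => rfl
  | mul x y _ _ hx hy =>
    show x (y t) = t
    rw [hy, hx]
  | inv x _ hx =>
    have h1 : x⁻¹ t = x⁻¹ (x t) := by rw [hx]
    rw [h1]
    exact x.symm_apply_apply t

lemma parab_expr {w : V ≃ₗ[ℝ] V}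
    (hw : w ∈ parabolic {α : V | α ∈ Δ ∧ ⟪t, α⟫ = 0}) :
    ∃ L : List (V ≃ₗ[ℝ] V), (∀ x ∈ L, x ∈ simpleReflections Δ) ∧ L.prod = w := by
  induction hw using Subgroup.closure_induction with
  | mem x hx =>
    obtain ⟨α, ⟨hαΔ, -⟩, h⟩ := hx
    exact ⟨[x], by simp; exact ⟨α, hαΔ, h⟩, List.prod_singleton⟩
  | one => exact ⟨[], by simp, rfl⟩
  | mul x y _ _ hx hy =>
    obtain ⟨L1, hL1, hL1p⟩ := hx
    obtain ⟨L2, hL2, hL2p⟩ := hy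
    refine ⟨L1 ++ L2, ?_, by rw [List.prod_append, hL1p, hL2p]⟩
    intro z hz
    rcases List.mem_append.mp hz with h | h
    · exact hL1 z h
    · exact hL2 z h
  | inv x _ hx =>
    obtain ⟨L, hL, hLp⟩ := hx
    exact ⟨L.reverse, fun z hz => hL z (List.mem_reverse.mp hz),
      by rw [← prod_reverse_inv hL, hLp]⟩

lemma neg_of_simples (hΦ : IsIrredRootSystem Φ) (hΔ : IsBase Φ Δ)
    (hb : ∀ a : {x // x ∈ Δ}, b a = (a : V)) {w : V ≃ₗ[ℝ] V}
    (hwW : w ∈ weylGroup Φ) {β : V} (hβ : IsPos Φ b β)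
    (h : ∀ a : {x // x ∈ Δ}, b.repr β a ≠ 0 → IsPos Φ b (-(w (a : V)))) :
    IsPos Φ b (-(w β)) := by
  have hrepr : ∀ a' : {x // x ∈ Δ}, b.repr (w β) a' ≤ 0 := by
    intro a'
    have hwβ : w β = ∑ a : {x // x ∈ Δ}, b.repr β a • w (a : V) := by
      conv_lhs => rw [sum_repr hb β]
      rw [map_sum]
      exact Finset.sum_congr rfl (fun a _ => by rw [map_smul])
    rw [hwβ, map_sum, Finsupp.coe_finset_sum, Finset.sum_apply]
    refine Finset.sum_nonpos (fun a _ => ?_)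
    rw [map_smul, Finsupp.smul_apply, smul_eq_mul]
    by_cases hz : b.repr β a = 0
    · rw [hz, zero_mul]
    · have h2 := (h a hz).2 a'
      rw [map_neg, Finsupp.neg_apply] at h2
      have h3 := hβ.2 a
      nlinarith
  have hwβΦ : w β ∈ Φ := W_root hΦ hwW hβ.1
  rcases pos_or_neg hΦ hΔ hb hwβΦ with h1 | h1
  · exact absurd (eq_zero_of_repr_zero hb
      (fun a => le_antisymm (hrepr a) (h1.2 a))) (root_ne_zero hΦ hwβΦ)
  · exact h1

end Ctx7
end LMLP
open LMLP in
/-- Let `Ĩ` be the set of simple roots orthogonal to the highest root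
`α̃`, `w₀` the longest element of `W` and `w_Ĩ` the longest element of `W_Ĩ`. Then
`w₀ w_Ĩ = w_Ĩ w₀ = s_α̃`, the reflection in the highest root. -/
theorem longest_mul_longest_parabolic (Φ : Set V) (hΦ : IsIrredRootSystem Φ)
    (Δ : Finset V) (hΔ : IsBase Φ Δ)
    (t : V) (ht : IsHighestRoot Φ Δ t)
    (w₀ : V ≃ₗ[ℝ] V) (hw₀ : w₀ ∈ weylGroup Φ)
    (hw₀max : ∀ w ∈ weylGroup Φ, len Δ w ≤ len Δ w₀)
    (wI : V ≃ₗ[ℝ] V) (hwI : wI ∈ parabolic {α : V | α ∈ Δ ∧ ⟪t, α⟫ = 0})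
    (hwImax : ∀ w ∈ parabolic {α : V | α ∈ Δ ∧ ⟪t, α⟫ = 0}, len Δ w ≤ len Δ wI)
    (s : V ≃ₗ[ℝ] V) (hs : ∀ v, s v = v - (2 * ⟪t, v⟫ / ⟪t, t⟫) • t) :
    w₀ * wI = s ∧ wI * w₀ = s := by
  classical
  -- the basis coming from the base Δ
  let b : Module.Basis {x // x ∈ Δ} ℝ V := Module.Basis.mk hΔ.2.1 (base_span hΦ hΔ)
  have hb : ∀ a : {x // x ∈ Δ}, b a = (a : V) := fun a => Module.Basis.mk_apply _ _ a
  have hsrefl : s = refl t := refl_eq_of_formula hs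
  have hs2 : s * s = 1 := by rw [hsrefl]; exact refl_mul_self t
  have hwIW : wI ∈ weylGroup Φ := parab_le_W hΔ hwI
  -- Δ is nonempty
  have hΔne : Δ.Nonempty := by
    obtain ⟨γ, hγ⟩ := hΦ.nonempty
    obtain ⟨c, hc, -⟩ := hΔ.2.2 γ hγ
    by_contra hne
    rw [Finset.not_nonempty_iff_eq_empty] at hne
    rw [hne, Finset.sum_empty] at hc
    exact root_ne_zero hΦ hγ hc
  obtain ⟨a₀, ha₀⟩ := hΔne
  -- a simple reflection has positive length, so `w₀` admits an expression
  have hlen_refl : 1 ≤ len Δ (refl a₀) := by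
    by_contra hcon
    push_neg at hcon
    have h0 : len Δ (refl a₀) = 0 := Nat.lt_one_iff.mp hcon
    have hne : Set.Nonempty {n | ∃ L : List (V ≃ₗ[ℝ] V),
        (∀ x ∈ L, x ∈ simpleReflections Δ) ∧ L.length = n ∧ L.prod = refl a₀} :=
      ⟨1, [refl a₀], by simpa using refl_mem_simple ha₀, rfl, List.prod_singleton⟩
    have hmem := Nat.sInf_mem hne
    rw [show sInf {n | ∃ L : List (V ≃ₗ[ℝ] V),
        (∀ x ∈ L, x ∈ simpleReflections Δ) ∧ L.length = n ∧ L.prod = refl a₀}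
      = len Δ (refl a₀) from rfl, h0] at hmem
    obtain ⟨L0, -, hl0, hp0⟩ := hmem
    have h1 : refl (a₀ : V) = 1 := by
      rw [← hp0, List.eq_nil_of_length_eq_zero hl0, List.prod_nil]
    have h2 : refl (a₀ : V) a₀ = a₀ := by rw [h1]; rfl
    rw [refl_apply_self a₀ (inner_self_pos' hΦ (hΔ.1 ha₀)).ne'] at h2
    have h3 : (2 : ℝ) • (a₀ : V) = 0 := by
      rw [two_smul]
      nth_rewrite 1 [← h2]
      exact neg_add_cancel _
    exact root_ne_zero hΦ (hΔ.1 ha₀)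
      ((smul_eq_zero.mp h3).resolve_left (by norm_num))
  have hw₀len : 1 ≤ len Δ w₀ := le_trans hlen_refl (hw₀max _ (refl_mem_W hΔ ha₀))
  have hw₀expr : ∃ L : List (V ≃ₗ[ℝ] V),
      (∀ x ∈ L, x ∈ simpleReflections Δ) ∧ L.prod = w₀ := by
    by_contra hcon
    have hempty : {n | ∃ L : List (V ≃ₗ[ℝ] V),
        (∀ x ∈ L, x ∈ simpleReflections Δ) ∧ L.length = n ∧ L.prod = w₀} = ∅ := by
      ext n
      simp only [Set.mem_empty_iff_false, iff_false, Set.mem_setOf_eq]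
      rintro ⟨L, h1, -, h3⟩
      exact hcon ⟨L, h1, h3⟩
    have h4 : len Δ w₀ = 0 := by rw [len, hempty, Nat.sInf_empty]
    omega
  obtain ⟨L0, hL0, hL0p⟩ := hw₀expr
  obtain ⟨LI, hLI, hLIp⟩ := parab_expr hwI
  obtain ⟨Ls, hLs, hLsp⟩ := refl_pos_expr hΦ hΔ hb (highest_pos hΦ hΔ hb ht)
  -- w₀ sends all simple roots to negative roots
  have hw₀simple : ∀ a : {x // x ∈ Δ}, IsPos Φ b (-(w₀ (a : V))) := by
    intro a
    rcases pos_or_neg hΦ hΔ hb (W_root hΦ hw₀ (hΔ.1 a.2)) with hp | hn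
    · exfalso
      have h1 : nInv Φ b (w₀ * refl (a : V)) = nInv Φ b w₀ + 1 :=
        nInv_mul_refl_pos hΦ hΔ hb hw₀ a.2 hp
      have hlw : len Δ w₀ = nInv Φ b w₀ := by
        rw [← hL0p]; exact len_eq_nInv hΦ hΔ hb L0 hL0
      have hprod2 : (L0 ++ [refl (a : V)]).prod = w₀ * refl (a : V) := by
        rw [List.prod_append, List.prod_singleton, hL0p]
      have hL2 : ∀ x ∈ L0 ++ [refl (a : V)], x ∈ simpleReflections Δ := by
        intro x hx
        rcases List.mem_append.mp hx with h | h
        · exact hL0 x h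
        · rw [List.mem_singleton.mp h]; exact refl_mem_simple a.2
      have hlw2 : len Δ (w₀ * refl (a : V)) = nInv Φ b (w₀ * refl (a : V)) := by
        rw [← hprod2]; exact len_eq_nInv hΦ hΔ hb _ hL2
      have hmax := hw₀max (w₀ * refl (a : V)) (mul_mem hw₀ (refl_mem_W hΔ a.2))
      omega
    · exact hn
  have hw₀neg : ∀ β, IsPos Φ b β → IsPos Φ b (-(w₀ β)) :=
    fun β hβ => neg_of_simples hΦ hΔ hb hw₀ hβ (fun a _ => hw₀simple a)
  -- wI facts
  have hwIt : wI t = t := parab_fix_t hwI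
  have hwIinner : ∀ β, ⟪t, wI β⟫ = ⟪t, β⟫ := by
    intro β
    conv_lhs => rw [← hwIt]
    exact W_orth hwIW t β
  have hwIsimple : ∀ a : {x // x ∈ Δ}, ⟪t, (a : V)⟫ = 0 →
      IsPos Φ b (-(wI (a : V))) := by
    intro a hat
    rcases pos_or_neg hΦ hΔ hb (W_root hΦ hwIW (hΔ.1 a.2)) with hp | hn
    · exfalso
      have h1 : nInv Φ b (wI * refl (a : V)) = nInv Φ b wI + 1 :=
        nInv_mul_refl_pos hΦ hΔ hb hwIW a.2 hp
      have hlw : len Δ wI = nInv Φ b wI := by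
        rw [← hLIp]; exact len_eq_nInv hΦ hΔ hb LI hLI
      have hprod2 : (LI ++ [refl (a : V)]).prod = wI * refl (a : V) := by
        rw [List.prod_append, List.prod_singleton, hLIp]
      have hL2 : ∀ x ∈ LI ++ [refl (a : V)], x ∈ simpleReflections Δ := by
        intro x hx
        rcases List.mem_append.mp hx with h | h
        · exact hLI x h
        · rw [List.mem_singleton.mp h]; exact refl_mem_simple a.2
      have hlw2 : len Δ (wI * refl (a : V)) = nInv Φ b (wI * refl (a : V)) := by
        rw [← hprod2]; exact len_eq_nInv hΦ hΔ hb _ hL2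
      have hmax := hwImax (wI * refl (a : V)) (mul_mem hwI (refl_parab_mem a.2 hat))
      omega
    · exact hn
  have hwIneg : ∀ β, IsPos Φ b β → ⟪t, β⟫ = 0 → IsPos Φ b (-(wI β)) := by
    intro β hβ hβt
    refine neg_of_simples hΦ hΔ hb hwIW hβ (fun a hz => ?_)
    have hta : ⟪t, (a : V)⟫ = 0 := by
      by_contra hne2
      have h1 : ∀ a' : {x // x ∈ Δ}, 0 ≤ b.repr β a' * ⟪t, (a' : V)⟫ :=
        fun a' => mul_nonneg (hβ.2 a')
          (inner_t_nonneg hΦ hΔ hb ht (pos_simple hΦ hΔ hb a'.2))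
      have h2 : ⟪t, β⟫ = ∑ a' : {x // x ∈ Δ}, b.repr β a' * ⟪t, (a' : V)⟫ := by
        conv_lhs => rw [show β = ∑ a' : {x // x ∈ Δ}, b.repr β a' • (a' : V)
          from sum_repr hb β]
        rw [inner_sum]
        exact Finset.sum_congr rfl (fun a' _ => by
          rw [real_inner_smul_right])
      rw [hβt] at h2
      have h3 := (Finset.sum_eq_zero_iff_of_nonneg (fun a' _ => h1 a')).mp h2.symm
        a (Finset.mem_univ a)
      rcases mul_eq_zero.mp h3 with h | h
      · exact hz h
      · exact hne2 h
    exact hwIsimple a hta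
  have hwIpos : ∀ β, IsPos Φ b β → 0 < ⟪t, β⟫ →
      IsPos Φ b (wI β) ∧ 0 < ⟪t, wI β⟫ := by
    intro β hβ h
    have h1 : ⟪t, wI β⟫ = ⟪t, β⟫ := hwIinner β
    exact ⟨pos_of_inner_t_pos hΦ hΔ hb ht (W_root hΦ hwIW hβ.1) (h1 ▸ h), h1 ▸ h⟩
  -- helper: an element with an expression preserving positivity is the identity
  have main1 : ∀ (u : V ≃ₗ[ℝ] V) (L : List (V ≃ₗ[ℝ] V)),
      (∀ x ∈ L, x ∈ simpleReflections Δ) → L.prod = u →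
      (∀ β, IsPos Φ b β → IsPos Φ b (u β)) → u = 1 := by
    intro u L hL hLp hposmap
    have hset : InvSet Φ b u = ∅ := by
      ext β
      simp only [Set.mem_empty_iff_false, iff_false, InvSet, Set.mem_setOf_eq]
      rintro ⟨h1, h2⟩
      exact pos_neg_incompat hΦ hb (hposmap β h1) h2
    have hnu : nInv Φ b u = 0 := by rw [nInv, hset, Set.ncard_empty]
    rw [← hLp]
    exact eq_one_of_nInv_zero hΦ hΔ hb L hL (by rw [hLp]; exact hnu)
  -- the key computation : w₀ * wI * s preserves positivity
  have hkey : ∀ β, IsPos Φ b β → IsPos Φ b ((w₀ * wI * s) β) := by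
    intro β hβ
    have happ : (w₀ * wI * s) β = w₀ (wI (s β)) := rfl
    by_cases hbt : ⟪t, β⟫ = 0
    · have h1 : s β = β := by rw [hsrefl]; exact st_fix hbt
      rw [happ, h1]
      have h4 := hw₀neg _ (hwIneg β hβ hbt)
      rwa [map_neg, neg_neg] at h4
    · have hpos : 0 < ⟪t, β⟫ :=
        lt_of_le_of_ne (inner_t_nonneg hΦ hΔ hb ht hβ) (Ne.symm hbt)
      obtain ⟨hγpos, hγt⟩ := st_neg hΦ hΔ hb ht hβ hpos
      obtain ⟨hwIγ, -⟩ := hwIpos _ hγpos hγt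
      have h5 : (w₀ * wI * s) β = -(w₀ (wI (-(refl t β)))) := by
        rw [happ, hsrefl, show refl t β = -(-(refl t β)) from (neg_neg _).symm,
          map_neg, map_neg, neg_neg, map_neg, map_neg]
      rw [h5]
      have h6 := hw₀neg _ hwIγ
      exact h6
  -- conclude w₀ * wI * s = 1
  have hALL : ∀ x ∈ L0 ++ LI ++ Ls, x ∈ simpleReflections Δ := by
    intro x hx
    rcases List.mem_append.mp hx with h | h
    · rcases List.mem_append.mp h with h' | h'
      · exact hL0 x h'
      · exact hLI x h'
    · exact hLs x h
  have hexpr : (L0 ++ LI ++ Ls).prod = w₀ * wI * s := by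
    rw [List.prod_append, List.prod_append, hL0p, hLIp, hLsp, hsrefl]
  have hu1 : w₀ * wI * s = 1 := main1 _ _ hALL hexpr hkey
  have hfst : w₀ * wI = s := by
    have h7 := congrArg (fun x => x * s) hu1
    simp only [one_mul] at h7
    rw [mul_assoc (w₀ * wI) s s, hs2, mul_one] at h7
    exact h7
  -- both longest elements are involutions
  have hw₀sq : w₀ * w₀ = 1 := by
    refine main1 _ (L0 ++ L0) ?_ (by rw [List.prod_append, hL0p]) ?_
    · intro x hx
      rcases List.mem_append.mp hx with h | h <;> exact hL0 x h
    · intro β hβ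
      have h4 := hw₀neg _ (hw₀neg β hβ)
      rwa [map_neg, neg_neg] at h4
  have hwIsq : wI * wI = 1 := by
    refine main1 _ (LI ++ LI) ?_ (by rw [List.prod_append, hLIp]) ?_
    · intro x hx
      rcases List.mem_append.mp hx with h | h <;> exact hLI x h
    · intro β hβ
      by_cases hbt : ⟪t, β⟫ = 0
      · have h2 := hwIneg β hβ hbt
        have h3 : ⟪t, -(wI β)⟫ = 0 := by
          rw [inner_neg_right, hwIinner, hbt, neg_zero]
        have h4 := hwIneg _ h2 h3
        rwa [show (wI * wI) β = wI (wI β) from rfl,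
          show wI (wI β) = -(-(wI (wI β))) from (neg_neg _).symm, ← map_neg]
      · have hpos : 0 < ⟪t, β⟫ :=
          lt_of_le_of_ne (inner_t_nonneg hΦ hΔ hb ht hβ) (Ne.symm hbt)
        obtain ⟨h1, h2⟩ := hwIpos β hβ hpos
        exact (hwIpos _ h1 h2).1
  have hsnd : wI * w₀ = s := by
    have h7 : (w₀ * wI) * (wI * w₀) = 1 := by
      rw [mul_assoc, ← mul_assoc wI wI w₀, hwIsq, one_mul, hw₀sq]
    have h8 : (w₀ * wI)⁻¹ = wI * w₀ := inv_eq_of_mul_eq_one_right h7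
    rw [← h8, hfst]
    exact inv_eq_of_mul_eq_one_right hs2
  exact ⟨hfst, hsnd⟩
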